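/- Let $K$ be a field of characteristic $p > 0$ with $[K : K^p] = p^d$ finite. Then for any finite field extension $L/K$, one has $[L : L^p] = [K : K^p] = p^d$; in particular, if $[K:K^p] \leq p^{n-1}$ then $[L:L^p] \leq p^{n-1}$ for every finite extension $L$ of $K$. -/

import Mathlib

/-- Let `K` be a field of characteristic `p > 0` with imperfection degree
`[K : Kᵖ] = p ^ d` finite.  Then for any finite extension `L/K` one has
`[L : Lᵖ] = [K : Kᵖ] = p ^ d`; in particular if `[K : Kᵖ] ≤ p ^ (n - 1)` then
`[L : Lᵖ] ≤ p ^ (n - 1)`. -/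
theorem imperfection_degree_finite_extension
    (K L : Type*) [Field K] [Field L] [Algebra K L] [FiniteDimensional K L]
    (p : ℕ) [Fact p.Prime] [CharP K p] [CharP L p] (d : ℕ)
    (h : Module.finrank ↥((frobenius K p).fieldRange) K = p ^ d) :
    Module.finrank ↥((frobenius L p).fieldRange) L = p ^ d ∧
      ∀ n : ℕ, p ^ d ≤ p ^ (n - 1) →
        Module.finrank ↥((frobenius L p).fieldRange) L ≤ p ^ (n - 1) := by
  set f : K →+* L := algebraMap K L with hf
  set F : L →+* L := (frobenius L p : L →+* L) with hF
  set A : Subfield L := f.fieldRange with hA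
  set Ap : Subfield L := A.map F with hApdef
  set Lp : Subfield L := F.fieldRange with hLp
  set Kp : Subfield K := (frobenius K p).fieldRange with hKp
  -- frobenius commutes with `f`
  have hFf : F.comp f = f.comp (frobenius K p) := by
    ext x
    simp [hF, frobenius_def, map_pow]
  have hAp_eq : Ap = Kp.map f := by
    rw [hApdef, hA, RingHom.map_fieldRange, hFf, hKp, RingHom.map_fieldRange]
  have hApA : Ap ≤ A := by
    rw [hAp_eq, hA, RingHom.fieldRange_eq_map]
    exact (Subfield.gc_map_comap _).monotone_l le_top
  have hApLp : Ap ≤ Lp := by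
    rw [hApdef, hLp, RingHom.fieldRange_eq_map]
    exact (Subfield.gc_map_comap _).monotone_l le_top
  -- multiplicativity in the two towers  Ap ≤ A ≤ ⊤  and  Ap ≤ Lp ≤ ⊤
  have e1 : Subfield.relfinrank Ap A * Subfield.relfinrank A ⊤ = Subfield.relfinrank Ap ⊤ :=
    Subfield.relfinrank_mul_relfinrank hApA le_top
  have e2 : Subfield.relfinrank Ap Lp * Subfield.relfinrank Lp ⊤ = Subfield.relfinrank Ap ⊤ :=
    Subfield.relfinrank_mul_relfinrank hApLp le_top
  -- frobenius is an isomorphism of `L` onto `Lp` carrying `A` to `Ap`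
  have e3 : Subfield.relfinrank Ap Lp = Subfield.relfinrank A ⊤ := by
    rw [hApdef, hLp, RingHom.fieldRange_eq_map, Subfield.relfinrank_map_map]
  -- `f` is an isomorphism of `K` onto `A` carrying `Kp` to `Ap`
  have e4 : Subfield.relfinrank Ap A = p ^ d := by
    rw [hAp_eq, hA, RingHom.fieldRange_eq_map, Subfield.relfinrank_map_map,
      Subfield.relfinrank_top_right]
    exact h
  -- `[L : A] = [L : K]` is finite and non-zero
  have hrank : Module.rank (↥A) L = Module.rank K L := by
    refine (rank_eq_of_equiv_equiv (R := K) (R' := ↥A) (M := L) (M₁ := L)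
      (fun k => f.rangeRestrictField k) (AddEquiv.refl L) ?_ ?_).symm
    · constructor
      · intro a b hab
        exact f.injective congr(($hab : L))
      · rintro ⟨-, k, rfl⟩
        exact ⟨k, rfl⟩
    · intro k l
      show k • l = _ • l
      rw [Algebra.smul_def]
      rfl
  have e5 : Subfield.relfinrank A ⊤ = Module.finrank K L := by
    rw [Subfield.relfinrank_top_right, Module.finrank, Module.finrank, hrank]
  have hn0 : Module.finrank K L ≠ 0 := Module.finrank_pos.ne'
  -- put everything together
  have key : Module.finrank ↥((frobenius L p).fieldRange) L = p ^ d := by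
    have : Module.finrank K L * Subfield.relfinrank Lp ⊤ = Module.finrank K L * (p ^ d) := by
      rw [← e5, mul_comm (Subfield.relfinrank A ⊤) (p ^ d), ← e4, e1, ← e2, e3, e5]
    have h2 := Nat.eq_of_mul_eq_mul_left (Nat.pos_of_ne_zero hn0) this
    rw [← Subfield.relfinrank_top_right, ← hLp, h2]
  exact ⟨key, fun n hn => key ▸ hn⟩
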